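/- Let β ∈ (0,1), let σ be a real number with 1 ≤ σ < 1/(1-β), let c ≥ 0, and let (J_k)_{k∈ℕ} and (ℓ_k)_{k∈ℕ} be sequences of nonnegative real numbers such that for all k: β·J_{k+1} ≤ J_k - ℓ_k and J_k ≤ σ·ℓ_k + c. Then limsup_{T→∞} (1/T)·∑_{k=0}^{T-1} ℓ_k ≤ c / (1/(1-β) - σ). -/

import Mathlib

open Filter

/-- Parametric bound on the averaged undiscounted closed-loop cost: if
`β J_{k+1} ≤ J_k - ℓ_k` and `J_k ≤ σ ℓ_k + c` with `1 ≤ σ < 1/(1-β)`, then the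
time-average of `ℓ_k` is asymptotically bounded by `c / (1/(1-β) - σ)`. -/
theorem stmt3 (β : ℝ) (hβ0 : 0 < β) (hβ1 : β < 1)
    (σ : ℝ) (hσ1 : 1 ≤ σ) (hσ : σ < 1 / (1 - β))
    (c : ℝ) (hc : 0 ≤ c)
    (J ℓ : ℕ → ℝ) (hJ : ∀ k, 0 ≤ J k) (hℓ : ∀ k, 0 ≤ ℓ k)
    (hstep : ∀ k, β * J (k + 1) ≤ J k - ℓ k)
    (hbound : ∀ k, J k ≤ σ * ℓ k + c) :
    limsup (fun T : ℕ => (1 / (T : ℝ)) * ∑ k ∈ Finset.range T, ℓ k) atTop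
      ≤ c / (1 / (1 - β) - σ) := by
  have hβ' : (0:ℝ) < 1 - β := by linarith
  have hd : 0 < 1 - (1 - β) * σ := by
    have := (lt_div_iff₀ hβ').mp hσ
    nlinarith
  set d : ℝ := 1 - (1 - β) * σ with hdd
  set b : ℝ := (1 - β) * c with hbb
  have hb : 0 ≤ b := by positivity
  -- key inequality by induction
  have key : ∀ T : ℕ, (∑ k ∈ Finset.range T, ℓ k) + β * J T ≤
      J 0 + (1 - β) * σ * (∑ k ∈ Finset.range T, ℓ k) + b * T := by
    intro T
    induction T with
    | zero => simp; nlinarith [hJ 0]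
    | succ T ih =>
      rw [Finset.sum_range_succ]
      push_cast
      have h1 := hstep T
      have h2 := hbound T
      have h3 := hℓ T
      nlinarith [hJ T, hJ (T+1)]
  have hS : ∀ T : ℕ, d * (∑ k ∈ Finset.range T, ℓ k) ≤ J 0 + b * T := by
    intro T
    have h := key T
    rw [hdd]
    nlinarith [mul_nonneg hβ0.le (hJ T)]
  -- majorant
  set g : ℕ → ℝ := fun T => J 0 / d * (1 / (T:ℝ)) + b / d with hg
  have hfg : ∀ᶠ T : ℕ in atTop, (1 / (T:ℝ)) * ∑ k ∈ Finset.range T, ℓ k ≤ g T := by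
    filter_upwards [eventually_ge_atTop (1:ℕ)] with T hT
    have hT0 : (0:ℝ) < T := by exact_mod_cast hT
    have := hS T
    have hsum : (∑ k ∈ Finset.range T, ℓ k) ≤ (J 0 + b * T) / d := by
      rw [le_div_iff₀ hd]; linarith [hS T]
    calc (1 / (T:ℝ)) * ∑ k ∈ Finset.range T, ℓ k
        ≤ (1 / (T:ℝ)) * ((J 0 + b * T) / d) := by
          apply mul_le_mul_of_nonneg_left hsum (by positivity)
      _ = g T := by rw [hg]; field_simp
  have hgt : Tendsto g atTop (nhds (b / d)) := by
    rw [hg]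
    have h1 : Tendsto (fun T : ℕ => J 0 / d * (1 / (T:ℝ))) atTop (nhds 0) := by
      simpa using (tendsto_one_div_atTop_nhds_zero_nat).const_mul (J 0 / d)
    simpa using h1.add (tendsto_const_nhds (x := b / d))
  have hcb : IsCoboundedUnder (· ≤ ·) atTop
      (fun T : ℕ => (1 / (T : ℝ)) * ∑ k ∈ Finset.range T, ℓ k) := by
    apply isCoboundedUnder_le_of_eventually_le (l := atTop) (x := 0)
    filter_upwards with T
    have : 0 ≤ ∑ k ∈ Finset.range T, ℓ k := Finset.sum_nonneg fun k _ => hℓ k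
    positivity
  have hbd : IsBoundedUnder (· ≤ ·) atTop g := hgt.isBoundedUnder_le
  have hls : limsup (fun T : ℕ => (1 / (T : ℝ)) * ∑ k ∈ Finset.range T, ℓ k) atTop
      ≤ limsup g atTop := limsup_le_limsup hfg hcb hbd
  rw [hgt.limsup_eq] at hls
  have hpos : 0 < 1 / (1 - β) - σ := sub_pos.mpr hσ
  have heq : b / d = c / (1 / (1 - β) - σ) := by
    rw [hbb, hdd, div_eq_div_iff (by rw [← hdd]; exact hd.ne') hpos.ne']
    field_simp
  linarith [hls, heq.symm.le]
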